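/- arXiv:2510.07965 — 3 statements merged into one kernel-verified Lean document; each statement's English description precedes it below -/
import Mathlib

section
/- Let X be a real-valued random variable whose survival function satisfies P(|X| ≥ x) = exp(−α(log x)^p)·L(x) for x large, where L is slowly varying and log L(x) = o((log x)^p), with α > 0 and p > 0. Let f : ℝ → ℝ be bijective with f and f⁻¹ globally Lipschitz. Then the survival function of f(X) satisfies −log P(|f(X)| ≥ t) = α(log t)^p·(1 + o(1)) as t → ∞; i.e., f(X) belongs to the same log-Weibull tail class with the same parameters (α, p). -/
open Filter MeasureTheory Real

/-- A function is slowly varying at infinity if `L (c*x) / L x → 1` for every `c > 0`. -/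
def SlowlyVarying (L : ℝ → ℝ) : Prop :=
  ∀ c : ℝ, 0 < c → Tendsto (fun x => L (c * x) / L x) atTop (nhds 1)

lemma logWeibull_shift_scale
    {Ω : Type*} [MeasureSpace Ω] (μ : Measure Ω) [IsProbabilityMeasure μ]
    (X : Ω → ℝ)
    (α p : ℝ) (hα : 0 < α) (hp : 0 < p)
    (L : ℝ → ℝ) (hLpos : ∀ x, 0 < x → 0 < L x)
    (hLsmall : Tendsto (fun x => Real.log (L x) / (Real.log x) ^ p) atTop (nhds 0))
    (htail : ∀ᶠ x in atTop,
      (μ {ω | x ≤ |X ω|}).toReal = Real.exp (-α * (Real.log x) ^ p) * L x)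
    (a b : ℝ) (ha : 0 < a) :
    Tendsto (fun t =>
        (-Real.log ((μ {ω | (t + b) / a ≤ |X ω|}).toReal)) / (α * (Real.log t) ^ p))
      atTop (nhds 1) := by
  set u : ℝ → ℝ := fun t => (t + b) / a with hu_def
  have hu : Tendsto u atTop atTop :=
    (tendsto_atTop_add_const_right atTop b tendsto_id).atTop_div_const ha
  have hratio : Tendsto (fun t => Real.log (u t) / Real.log t) atTop (nhds 1) := by
    have hdiff : Tendsto (fun t => Real.log (u t) - Real.log t) atTop (nhds (Real.log (1/a))) := by
      have h1 : Tendsto (fun t => u t / t) atTop (nhds (1/a)) := by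
        have : (fun t : ℝ => u t / t) =ᶠ[atTop] fun t => (1 + b / t) / a := by
          filter_upwards [eventually_gt_atTop (0:ℝ)] with t ht
          field_simp [hu_def]
          simp only [hu_def]; field_simp
          try ring
          try exact Or.inl trivial
        rw [tendsto_congr' this]
        have : Tendsto (fun t : ℝ => (1 + b / t) / a) atTop (nhds ((1 + 0) / a)) :=
          ((tendsto_const_nhds.add (tendsto_const_nhds.div_atTop tendsto_id)).div_const a)
        simpa using this
      have h2 : Tendsto (fun t => Real.log (u t / t)) atTop (nhds (Real.log (1/a))) :=
        (Real.continuousAt_log (by positivity)).tendsto.comp h1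
      apply h2.congr'
      filter_upwards [hu.eventually (eventually_gt_atTop (0:ℝ)), eventually_gt_atTop (0:ℝ)]
        with t hut ht
      rw [Real.log_div (ne_of_gt hut) (ne_of_gt ht)]
    have hinv : Tendsto (fun t : ℝ => (Real.log t)⁻¹) atTop (nhds 0) :=
      (Real.tendsto_log_atTop.comp tendsto_id).inv_tendsto_atTop
    have := (hdiff.mul hinv)
    have h3 : Tendsto (fun t => (Real.log (u t) - Real.log t) * (Real.log t)⁻¹ + 1)
        atTop (nhds 1) := by simpa using this.add (tendsto_const_nhds (x := (1:ℝ)))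
    apply h3.congr'
    filter_upwards [eventually_gt_atTop (1:ℝ)] with t ht
    have hlt : Real.log t ≠ 0 := ne_of_gt (Real.log_pos ht)
    field_simp
    ring
  have hA : Tendsto (fun t => (Real.log (u t)) ^ p / (Real.log t) ^ p) atTop (nhds 1) := by
    have h4 : Tendsto (fun t => (Real.log (u t) / Real.log t) ^ p) atTop (nhds ((1:ℝ) ^ p)) :=
      hratio.rpow_const (Or.inr hp.le)
    rw [Real.one_rpow] at h4
    apply h4.congr'
    filter_upwards [hu.eventually (eventually_gt_atTop (1:ℝ)), eventually_gt_atTop (1:ℝ)]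
      with t hut ht
    rw [Real.div_rpow (Real.log_nonneg hut.le) (Real.log_nonneg ht.le)]
  have hB : Tendsto (fun t => Real.log (L (u t)) / (Real.log (u t)) ^ p) atTop (nhds 0) :=
    hLsmall.comp hu
  have hlim : Tendsto (fun t =>
      ((Real.log (u t)) ^ p / (Real.log t) ^ p) *
        (1 - (Real.log (L (u t)) / (Real.log (u t)) ^ p) / α)) atTop (nhds 1) := by
    have : Tendsto (fun t =>
        ((Real.log (u t)) ^ p / (Real.log t) ^ p) *
          (1 - (Real.log (L (u t)) / (Real.log (u t)) ^ p) / α)) atTop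
        (nhds (1 * (1 - 0 / α))) := hA.mul (tendsto_const_nhds.sub (hB.div_const α))
    simpa using this
  apply hlim.congr'
  filter_upwards [hu.eventually htail, hu.eventually (eventually_gt_atTop (1:ℝ)),
    eventually_gt_atTop (1:ℝ)] with t htl hut ht
  have hLu : 0 < L (u t) := hLpos _ (lt_trans one_pos hut)
  have hlogu : 0 < Real.log (u t) := Real.log_pos hut
  have hlogt : 0 < Real.log t := Real.log_pos ht
  have hX : (0:ℝ) < (Real.log (u t)) ^ p := Real.rpow_pos_of_pos hlogu p
  have hY : (0:ℝ) < (Real.log t) ^ p := Real.rpow_pos_of_pos hlogt p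
  rw [htl, Real.log_mul (Real.exp_ne_zero _) (ne_of_gt hLu), Real.log_exp]
  field_simp
  ring

/-- bi-Lipschitz bijections preserve the log-Weibull tail class `𝓛ᵖ_α`
with the same parameters: `-log P(|f(X)| ≥ t) = α (log t)^p (1 + o(1))`. -/
theorem bilipschitz_preserves_logWeibull_class
    {Ω : Type*} [MeasureSpace Ω] (μ : Measure Ω) [IsProbabilityMeasure μ]
    (X : Ω → ℝ) (hX : Measurable X)
    (α p : ℝ) (hα : 0 < α) (hp : 0 < p)
    (L : ℝ → ℝ) (hLpos : ∀ x, 0 < x → 0 < L x) (hL : SlowlyVarying L)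
    (hLsmall : Tendsto (fun x => Real.log (L x) / (Real.log x) ^ p) atTop (nhds 0))
    (htail : ∀ᶠ x in atTop,
      (μ {ω | x ≤ |X ω|}).toReal = Real.exp (-α * (Real.log x) ^ p) * L x)
    (f : ℝ → ℝ) (hbij : Function.Bijective f)
    (Mf mf : ℝ) (hMf : 0 < Mf) (hmf : 0 < mf)
    (hfLip : ∀ x y, |f x - f y| ≤ Mf * |x - y|)
    (hfinvLip : ∀ u v, |Function.invFun f u - Function.invFun f v| ≤ (1 / mf) * |u - v|) :
    Tendsto (fun t =>
        (-Real.log ((μ {ω | t ≤ |f (X ω)|}).toReal)) / (α * (Real.log t) ^ p))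
      atTop (nhds 1) := by
  set c : ℝ := |f 0| with hc_def
  -- lower Lipschitz bound  mf * |x| ≤ |f x - f 0|
  have hlow : ∀ x : ℝ, mf * |x| ≤ |f x - f 0| := by
    intro x
    have h := hfinvLip (f x) (f 0)
    have hinx : Function.invFun f (f x) = x := Function.leftInverse_invFun hbij.injective x
    have hin0 : Function.invFun f (f 0) = 0 := Function.leftInverse_invFun hbij.injective 0
    rw [hinx, hin0, sub_zero] at h
    calc mf * |x| ≤ mf * ((1 / mf) * |f x - f 0|) := by
          exact mul_le_mul_of_nonneg_left h hmf.le
      _ = |f x - f 0| := by field_simp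
  -- set inclusions
  have hsub1 : ∀ t : ℝ, {ω | (t + c) / mf ≤ |X ω|} ⊆ {ω | t ≤ |f (X ω)|} := by
    intro t ω hω
    simp only [Set.mem_setOf_eq] at hω ⊢
    have h1 : t + c ≤ mf * |X ω| := (div_le_iff₀' hmf).mp hω
    have h2 : mf * |X ω| ≤ |f (X ω) - f 0| := hlow _
    have h3 : |f (X ω) - f 0| ≤ |f (X ω)| + |f 0| := abs_sub _ _
    linarith
  have hsub2 : ∀ t : ℝ, {ω | t ≤ |f (X ω)|} ⊆ {ω | (t + -c) / Mf ≤ |X ω|} := by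
    intro t ω hω
    simp only [Set.mem_setOf_eq] at hω ⊢
    have h1 : |f (X ω)| ≤ |f (X ω) - f 0| + |f 0| := by
      have := abs_add_le (f (X ω) - f 0) (f 0); simpa using this
    have h2 : |f (X ω) - f 0| ≤ Mf * |X ω - 0| := hfLip _ _
    rw [sub_zero] at h2
    have h3 : t + -c ≤ Mf * |X ω| := by linarith
    exact (div_le_iff₀' hMf).mpr h3
  -- two tail limits from the helper lemma
  have hlim1 := logWeibull_shift_scale μ X α p hα hp L hLpos hLsmall htail mf c hmf
  have hlim2 := logWeibull_shift_scale μ X α p hα hp L hLpos hLsmall htail Mf (-c) hMf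
  -- eventual positivity of the smaller tail
  have hu1 : Tendsto (fun t : ℝ => (t + c) / mf) atTop atTop :=
    (tendsto_atTop_add_const_right atTop c tendsto_id).atTop_div_const hmf
  have hpos : ∀ᶠ t in atTop, 0 < (μ {ω | (t + c) / mf ≤ |X ω|}).toReal := by
    filter_upwards [hu1.eventually htail, hu1.eventually (eventually_gt_atTop (0:ℝ))]
      with t htl hut
    rw [htl]
    exact mul_pos (Real.exp_pos _) (hLpos _ hut)
  -- squeeze
  have key : ∀ᶠ t in atTop,
      0 < (μ {ω | t ≤ |f (X ω)|}).toReal ∧ 0 < α * (Real.log t) ^ p := by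
    filter_upwards [hpos, eventually_gt_atTop (1:ℝ)] with t hPt ht
    refine ⟨lt_of_lt_of_le hPt ?_, mul_pos hα (Real.rpow_pos_of_pos (Real.log_pos ht) p)⟩
    exact ENNReal.toReal_mono (measure_ne_top μ _) (measure_mono (hsub1 t))
  apply tendsto_of_tendsto_of_tendsto_of_le_of_le' hlim2 hlim1
  · -- lower bound: -log P2 / D ≤ -log P / D, since P ≤ P2
    filter_upwards [key] with t ⟨hPt, hD⟩
    have hle : (μ {ω | t ≤ |f (X ω)|}).toReal
        ≤ (μ {ω | (t + -c) / Mf ≤ |X ω|}).toReal :=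
      ENNReal.toReal_mono (measure_ne_top μ _) (measure_mono (hsub2 t))
    have := Real.log_le_log hPt hle
    apply div_le_div_of_nonneg_right (by linarith) hD.le
  · -- upper bound: -log P / D ≤ -log P1 / D, since P1 ≤ P
    filter_upwards [key, hpos] with t ⟨hPt, hD⟩ hP1
    have hle : (μ {ω | (t + c) / mf ≤ |X ω|}).toReal
        ≤ (μ {ω | t ≤ |f (X ω)|}).toReal :=
      ENNReal.toReal_mono (measure_ne_top μ _) (measure_mono (hsub1 t))
    have := Real.log_le_log hP1 hle
    apply div_le_div_of_nonneg_right (by linarith) hD.le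
end

section
/- Let X be a real-valued random variable with P(|X| ≥ x) = exp(−α x^p)·L(x) where L is slowly varying, log L(x) = o(x^p), α > 0, p > 0. Let f : ℝ → ℝ be bijective with f being M-Lipschitz and f⁻¹ being (1/m)-Lipschitz. Then there exists α̃ ∈ [α/M^p, α/m^p] such that −log P(|f(X)| ≥ t) = α̃·t^p·(1+o(1)) along a subsequence; in particular, limsup_{t→∞} −log P(|f(X)| ≥ t)/t^p ≤ α/m^p and liminf_{t→∞} −log P(|f(X)| ≥ t)/t^p ≥ α/M^p. -/
open Filter MeasureTheory Real

/-- a bi-Lipschitz bijection maps the light-tailed class `𝓔ᵖ_α` into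
`𝓔ᵖ_{α̃}` with `α̃ ∈ [α/M^p, α/m^p]`: the normalized negative log-survival function of
`f(X)` has limsup at most `α/m^p`, liminf at least `α/M^p`, and some value
`α̃` in that interval is attained as a limit along a subsequence. -/
theorem bilipschitz_preserves_exponential_class
    {Ω : Type*} [MeasureSpace Ω] (μ : Measure Ω) [IsProbabilityMeasure μ]
    (X : Ω → ℝ) (hX : Measurable X)
    (α p : ℝ) (hα : 0 < α) (hp : 0 < p)
    (L : ℝ → ℝ) (hLpos : ∀ x, 0 < x → 0 < L x) (hL : SlowlyVarying L)
    (hLsmall : Tendsto (fun x => Real.log (L x) / x ^ p) atTop (nhds 0))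
    (htail : ∀ᶠ x in atTop,
      (μ {ω | x ≤ |X ω|}).toReal = Real.exp (-α * x ^ p) * L x)
    (f : ℝ → ℝ) (hbij : Function.Bijective f)
    (M m : ℝ) (hm : 0 < m) (hMm : m ≤ M)
    (hfLip : ∀ x y, |f x - f y| ≤ M * |x - y|)
    (hfinvLip : ∀ u v, |Function.invFun f u - Function.invFun f v| ≤ (1 / m) * |u - v|) :
    (limsup (fun t => (-Real.log ((μ {ω | t ≤ |f (X ω)|}).toReal)) / t ^ p) atTop
        ≤ α / m ^ p) ∧
    (α / M ^ p ≤
      liminf (fun t => (-Real.log ((μ {ω | t ≤ |f (X ω)|}).toReal)) / t ^ p) atTop) ∧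
    (∃ α' : ℝ, α / M ^ p ≤ α' ∧ α' ≤ α / m ^ p ∧
      ∃ t : ℕ → ℝ, StrictMono t ∧ Tendsto t atTop atTop ∧
        Tendsto (fun n =>
            (-Real.log ((μ {ω | t n ≤ |f (X ω)|}).toReal)) / (t n) ^ p)
          atTop (nhds α')) := by
  classical
  have hM : 0 < M := lt_of_lt_of_le hm hMm
  set c : ℝ := |f 0| with hcdef
  have hc0 : 0 ≤ c := abs_nonneg _
  set g : ℝ → ℝ :=
    fun t => (-Real.log ((μ {ω | t ≤ |f (X ω)|}).toReal)) / t ^ p with hgdef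
  -- pointwise bounds on |f x|
  have hflow : ∀ x : ℝ, m * |x| ≤ |f x| + c := by
    intro x
    have h1 := hfinvLip (f x) (f 0)
    rw [Function.leftInverse_invFun hbij.1, Function.leftInverse_invFun hbij.1] at h1
    have h2 : m * |x| ≤ |f x - f 0| := by
      have := mul_le_mul_of_nonneg_left h1 hm.le
      rw [sub_zero] at this
      calc m * |x| ≤ m * (1 / m * |f x - f 0|) := this
        _ = |f x - f 0| := by field_simp
    have h3 : |f x - f 0| ≤ |f x| + |f 0| := abs_sub _ _
    calc m * |x| ≤ |f x - f 0| := h2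
      _ ≤ |f x| + c := h3
  have hfup : ∀ x : ℝ, |f x| ≤ M * |x| + c := by
    intro x
    have h1 := hfLip x 0
    rw [sub_zero] at h1
    have h2 : |f x| - |f 0| ≤ |f x - f 0| := abs_sub_abs_le_abs_sub _ _
    have : |f x| - c ≤ M * |x| := le_trans (by simpa using h2) h1
    linarith
  -- sandwich on survival functions
  have hsand : ∀ t : ℝ,
      (μ {ω | (t + c) / m ≤ |X ω|}).toReal ≤ (μ {ω | t ≤ |f (X ω)|}).toReal ∧
      (μ {ω | t ≤ |f (X ω)|}).toReal ≤ (μ {ω | (t - c) / M ≤ |X ω|}).toReal := by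
    intro t
    constructor
    · refine ENNReal.toReal_mono (measure_ne_top μ _) (measure_mono ?_)
      intro ω hω
      simp only [Set.mem_setOf_eq] at *
      have h1 : t + c ≤ |X ω| * m := (div_le_iff₀ hm).mp hω
      have h2 := hflow (X ω)
      nlinarith
    · refine ENNReal.toReal_mono (measure_ne_top μ _) (measure_mono ?_)
      intro ω hω
      simp only [Set.mem_setOf_eq] at *
      have h2 := hfup (X ω)
      rw [div_le_iff₀ hM]
      nlinarith
  -- generic limit computation
  have key : ∀ d k : ℝ, 0 < k →
      Tendsto (fun t => (α * ((t + d) / k) ^ p - Real.log (L ((t + d) / k))) / t ^ p)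
        atTop (nhds (α / k ^ p)) := by
    intro d k hk
    have hy : Tendsto (fun t : ℝ => (t + d) / k) atTop atTop :=
      Tendsto.atTop_div_const hk (tendsto_atTop_add_const_right atTop d tendsto_id)
    have hdiv : Tendsto (fun t : ℝ => (t + d) / k / t) atTop (nhds (1 / k)) := by
      have h1 : Tendsto (fun t : ℝ => d / t) atTop (nhds 0) :=
        tendsto_const_nhds.div_atTop tendsto_id
      have h2 : Tendsto (fun t : ℝ => (1 + d / t) * (1 / k)) atTop (nhds (1 / k)) := by
        have := ((tendsto_const_nhds (x := (1:ℝ))).add h1).mul (tendsto_const_nhds (x := 1 / k))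
        simpa using this
      apply h2.congr'
      filter_upwards [eventually_gt_atTop (0 : ℝ)] with t ht
      have ht' : t ≠ 0 := ht.ne'
      have hk' : k ≠ 0 := hk.ne'
      field_simp
    have hrpow : Tendsto (fun t : ℝ => ((t + d) / k / t) ^ p) atTop (nhds ((1 / k) ^ p)) :=
      ((Real.continuousAt_rpow_const (1 / k) p (Or.inl (by positivity))).tendsto).comp hdiv
    have hlog : Tendsto (fun t : ℝ => Real.log (L ((t + d) / k)) / ((t + d) / k) ^ p)
        atTop (nhds 0) := hLsmall.comp hy
    have hmain : Tendsto
        (fun t : ℝ => (α - Real.log (L ((t + d) / k)) / ((t + d) / k) ^ p)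
          * ((t + d) / k / t) ^ p)
        atTop (nhds ((α - 0) * (1 / k) ^ p)) :=
      (tendsto_const_nhds.sub hlog).mul hrpow
    have heq : (α - 0) * (1 / k) ^ p = α / k ^ p := by
      rw [sub_zero, one_div, Real.inv_rpow hk.le, ← one_div, mul_one_div]
    rw [heq] at hmain
    apply hmain.congr'
    filter_upwards [eventually_gt_atTop (0 : ℝ), hy.eventually_gt_atTop 0] with t ht hyt
    have htp : (0 : ℝ) < t ^ p := Real.rpow_pos_of_pos ht p
    have hyp : (0 : ℝ) < ((t + d) / k) ^ p := Real.rpow_pos_of_pos hyt p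
    rw [Real.div_rpow hyt.le ht.le]
    field_simp
  have hU : Tendsto
      (fun t => (α * ((t + c) / m) ^ p - Real.log (L ((t + c) / m))) / t ^ p)
      atTop (nhds (α / m ^ p)) := key c m hm
  have hLo : Tendsto
      (fun t => (α * ((t - c) / M) ^ p - Real.log (L ((t - c) / M))) / t ^ p)
      atTop (nhds (α / M ^ p)) := by
    have := key (-c) M hM
    exact this.congr fun t => by rw [← sub_eq_add_neg]
  set U : ℝ → ℝ :=
    fun t => (α * ((t + c) / m) ^ p - Real.log (L ((t + c) / m))) / t ^ p with hUdef
  set Lo : ℝ → ℝ :=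
    fun t => (α * ((t - c) / M) ^ p - Real.log (L ((t - c) / M))) / t ^ p with hLodef
  -- the eventual sandwich for g
  have hy1T : Tendsto (fun t : ℝ => (t + c) / m) atTop atTop :=
    Tendsto.atTop_div_const hm (tendsto_atTop_add_const_right atTop c tendsto_id)
  have hy2T : Tendsto (fun t : ℝ => (t - c) / M) atTop atTop :=
    Tendsto.atTop_div_const hM
      (((tendsto_atTop_add_const_right atTop (-c) tendsto_id)).congr
        (fun t => by simp [sub_eq_add_neg]))
  have hev : ∀ᶠ t in atTop, Lo t ≤ g t ∧ g t ≤ U t := by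
    filter_upwards [eventually_gt_atTop (0 : ℝ), hy1T.eventually htail,
      hy2T.eventually htail, hy1T.eventually_gt_atTop 0, hy2T.eventually_gt_atTop 0]
      with t ht ht1 ht2 hy1 hy2
    have hL1 : 0 < L ((t + c) / m) := hLpos _ hy1
    have hL2 : 0 < L ((t - c) / M) := hLpos _ hy2
    have hs := hsand t
    have hlow : Real.exp (-α * ((t + c) / m) ^ p) * L ((t + c) / m)
        ≤ (μ {ω | t ≤ |f (X ω)|}).toReal := ht1 ▸ hs.1
    have hup : (μ {ω | t ≤ |f (X ω)|}).toReal
        ≤ Real.exp (-α * ((t - c) / M) ^ p) * L ((t - c) / M) := ht2 ▸ hs.2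
    have hApos : 0 < (μ {ω | t ≤ |f (X ω)|}).toReal :=
      lt_of_lt_of_le (by positivity) hlow
    have htp : (0 : ℝ) < t ^ p := Real.rpow_pos_of_pos ht p
    constructor
    · have h1 : Real.log ((μ {ω | t ≤ |f (X ω)|}).toReal)
          ≤ -α * ((t - c) / M) ^ p + Real.log (L ((t - c) / M)) := by
        calc Real.log ((μ {ω | t ≤ |f (X ω)|}).toReal)
            ≤ Real.log (Real.exp (-α * ((t - c) / M) ^ p) * L ((t - c) / M)) :=
              Real.log_le_log hApos hup
          _ = -α * ((t - c) / M) ^ p + Real.log (L ((t - c) / M)) := by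
              rw [Real.log_mul (Real.exp_ne_zero _) hL2.ne', Real.log_exp]
      have h2 : α * ((t - c) / M) ^ p - Real.log (L ((t - c) / M))
          ≤ -Real.log ((μ {ω | t ≤ |f (X ω)|}).toReal) := by linarith
      exact div_le_div_of_nonneg_right h2 htp.le |>.trans_eq rfl
    · have h1 : -α * ((t + c) / m) ^ p + Real.log (L ((t + c) / m))
          ≤ Real.log ((μ {ω | t ≤ |f (X ω)|}).toReal) := by
        have := Real.log_le_log (by positivity) hlow
        rwa [Real.log_mul (Real.exp_ne_zero _) hL1.ne', Real.log_exp] at this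
      have h2 : -Real.log ((μ {ω | t ≤ |f (X ω)|}).toReal)
          ≤ α * ((t + c) / m) ^ p - Real.log (L ((t + c) / m)) := by linarith
      exact div_le_div_of_nonneg_right h2 htp.le |>.trans_eq rfl
  have hgU : ∀ᶠ t in atTop, g t ≤ U t := hev.mono fun t h => h.2
  have hLog : ∀ᶠ t in atTop, Lo t ≤ g t := hev.mono fun t h => h.1
  have hbddU : IsBoundedUnder (· ≤ ·) atTop U := hU.isBoundedUnder_le
  have hbddLo : IsBoundedUnder (· ≥ ·) atTop Lo := hLo.isBoundedUnder_ge
  have hgBddAbove : IsBoundedUnder (· ≤ ·) atTop g := hbddU.mono_le hgU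
  have hgBddBelow : IsBoundedUnder (· ≥ ·) atTop g := hbddLo.mono_ge hLog
  have hgCoAbove : IsCoboundedUnder (· ≤ ·) atTop g := hgBddBelow.isCoboundedUnder_le
  have hgCoBelow : IsCoboundedUnder (· ≥ ·) atTop g := hgBddAbove.isCoboundedUnder_ge
  refine ⟨?_, ?_, ?_⟩
  · calc limsup g atTop ≤ limsup U atTop := limsup_le_limsup hgU hgCoAbove hbddU
      _ = α / m ^ p := hU.limsup_eq
  · calc α / M ^ p = liminf Lo atTop := hLo.liminf_eq.symm
      _ ≤ liminf g atTop := liminf_le_liminf hLog hbddLo hgCoBelow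
  · -- subsequence part
    have hbox : ∀ᶠ t in atTop, g t ∈ Set.Icc (α / M ^ p - 1) (α / m ^ p + 1) := by
      filter_upwards [hev,
        hLo.eventually (eventually_ge_nhds (show α / M ^ p - 1 < α / M ^ p by linarith)),
        hU.eventually (eventually_le_nhds (show α / m ^ p < α / m ^ p + 1 by linarith))]
        with t h h1 h2
      exact ⟨le_trans h1 h.1, le_trans h.2 h2⟩
    obtain ⟨T, hT⟩ := eventually_atTop.mp hbox
    have hmem : ∀ n : ℕ, g (T + n) ∈ Set.Icc (α / M ^ p - 1) (α / m ^ p + 1) :=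
      fun n => hT _ (le_add_of_nonneg_right (Nat.cast_nonneg n))
    obtain ⟨a, -, φ, hφ, hconv⟩ :=
      tendsto_subseq_of_bounded (Metric.isBounded_Icc _ _) hmem
    have htT : Tendsto (fun n : ℕ => T + (φ n : ℝ)) atTop atTop :=
      tendsto_atTop_add_const_left atTop T
        (tendsto_natCast_atTop_atTop.comp hφ.tendsto_atTop)
    have hgconv : Tendsto (fun n : ℕ => g (T + φ n)) atTop (nhds a) := hconv
    have hLoSeq : Tendsto (fun n : ℕ => Lo (T + φ n)) atTop (nhds (α / M ^ p)) :=
      hLo.comp htT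
    have hUSeq : Tendsto (fun n : ℕ => U (T + φ n)) atTop (nhds (α / m ^ p)) :=
      hU.comp htT
    refine ⟨a, ?_, ?_, fun n => T + φ n, ?_, htT, hgconv⟩
    · exact le_of_tendsto_of_tendsto hLoSeq hgconv (htT.eventually hLog)
    · exact le_of_tendsto_of_tendsto hgconv hUSeq (htT.eventually hgU)
    · intro i j hij
      exact (add_lt_add_iff_left T).mpr (by exact_mod_cast hφ hij)
end

section
/- Fix μ ∈ ℝ, σ > 0, and ξ > 0. Define T : ℝ → ℝ by T(z) = μ + σ·(s/ξ)·[erfc(|z−μ|/(σ√2))^{−ξ} − 1], where s = sign(z − μ) (with T(μ) = μ). Then T is strictly increasing on ℝ, its derivative for z ≠ μ equals T'(z) = √(2/π)·exp(−(z−μ)²/(2σ²))·erfc(|z−μ|/(σ√2))^{−(ξ+1)}, and T'(z) → √(2/π) as z → μ, so T is C¹ at μ with derivative √(2/π) independent of ξ and σ. -/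
open Real Set
open MeasureTheory Filter Topology

/-- The complementary error function `erfc x = (2/√π) ∫_x^∞ e^{-t²} dt`. -/
noncomputable def erfc (x : ℝ) : ℝ :=
  (2 / Real.sqrt π) * ∫ t in Set.Ioi x, Real.exp (-t ^ 2)

/-- The Tail Transform Flow coordinate map with location `μ`, scale `σ` and tail
parameter `ξ` (equal on both sides). -/
noncomputable def TTF (μ σ ξ : ℝ) (z : ℝ) : ℝ :=
  μ + σ * (Real.sign (z - μ) / ξ) *
    (erfc (|z - μ| / (σ * Real.sqrt 2)) ^ (-ξ) - 1)

lemma gauss_integrable : Integrable (fun t : ℝ => Real.exp (-t ^ 2)) := by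
  simpa using integrable_exp_neg_mul_sq (one_pos)

lemma gauss_cont : Continuous (fun t : ℝ => Real.exp (-t ^ 2)) := by continuity

lemma erfc_eq (y : ℝ) : erfc y =
    (2 / Real.sqrt π) * ((∫ t : ℝ, Real.exp (-t ^ 2)) - ∫ t in Set.Iic (0:ℝ), Real.exp (-t ^ 2))
      - (2 / Real.sqrt π) * ∫ t in (0:ℝ)..y, Real.exp (-t ^ 2) := by
  have h1 := intervalIntegral.integral_Iic_add_Ioi (b := y) (f := fun t : ℝ => Real.exp (-t ^ 2))
    gauss_integrable.integrableOn gauss_integrable.integrableOn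
  have h2 := intervalIntegral.integral_Iic_sub_Iic (a := (0:ℝ)) (b := y)
    (f := fun t : ℝ => Real.exp (-t ^ 2))
    gauss_integrable.integrableOn gauss_integrable.integrableOn
  unfold erfc
  linear_combination (2 / Real.sqrt π) * h1 - (2 / Real.sqrt π) * h2

lemma erfc_hasDerivAt (x : ℝ) :
    HasDerivAt erfc (-(2 / Real.sqrt π) * Real.exp (-x ^ 2)) x := by
  have h := intervalIntegral.integral_hasDerivAt_right
    (gauss_cont.intervalIntegrable 0 x)
    (gauss_cont.stronglyMeasurableAtFilter _ _) gauss_cont.continuousAt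
  have h2 := ((h.const_mul (2 / Real.sqrt π)).const_sub
    ((2 / Real.sqrt π) * ((∫ t : ℝ, Real.exp (-t ^ 2)) - ∫ t in Set.Iic (0:ℝ), Real.exp (-t ^ 2))))
  have : erfc = fun y => (2 / Real.sqrt π) * ((∫ t : ℝ, Real.exp (-t ^ 2))
      - ∫ t in Set.Iic (0:ℝ), Real.exp (-t ^ 2))
      - (2 / Real.sqrt π) * ∫ t in (0:ℝ)..y, Real.exp (-t ^ 2) := funext erfc_eq
  rw [this]
  simpa [neg_mul] using h2

lemma erfc_zero : erfc 0 = 1 := by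
  unfold erfc
  have h : ∫ t in Set.Ioi (0:ℝ), Real.exp (-t ^ 2) = Real.sqrt (π/1) / 2 := by
    simpa using integral_gaussian_Ioi 1
  rw [h]
  have hπ : Real.sqrt π ≠ 0 := ne_of_gt (Real.sqrt_pos.mpr Real.pi_pos)
  field_simp

lemma erfc_pos (x : ℝ) : 0 < erfc x := by
  unfold erfc
  apply mul_pos (by positivity)
  rw [setIntegral_pos_iff_support_of_nonneg_ae]
  · have : (Function.support fun t : ℝ => Real.exp (-t ^ 2)) = Set.univ := by
      ext t; simp [Function.support, Real.exp_ne_zero]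
    rw [this, Set.univ_inter]
    simp [Real.volume_Ioi]
  · filter_upwards with t using (Real.exp_pos _).le
  · exact gauss_integrable.integrableOn

lemma erfc_continuous : Continuous erfc :=
  continuous_iff_continuousAt.mpr fun x => (erfc_hasDerivAt x).continuousAt

/-- the TTF map is strictly increasing, has the stated derivative away
from `μ`, and is `C¹` at `μ` with derivative `√(2/π)` independent of `ξ` and `σ`. -/
theorem TTF_strictMono_deriv (μ σ ξ : ℝ) (hσ : 0 < σ) (hξ : 0 < ξ) :
    StrictMono (TTF μ σ ξ) ∧
    (∀ z : ℝ, z ≠ μ →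
      HasDerivAt (TTF μ σ ξ)
        (Real.sqrt (2 / π) * Real.exp (-(z - μ) ^ 2 / (2 * σ ^ 2)) *
          erfc (|z - μ| / (σ * Real.sqrt 2)) ^ (-(ξ + 1))) z) ∧
    HasDerivAt (TTF μ σ ξ) (Real.sqrt (2 / π)) μ ∧
    ContinuousAt (deriv (TTF μ σ ξ)) μ := by
  set g : ℝ → ℝ := fun z => Real.sqrt (2 / π) * Real.exp (-(z - μ) ^ 2 / (2 * σ ^ 2)) *
    erfc (|z - μ| / (σ * Real.sqrt 2)) ^ (-(ξ + 1)) with hg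
  have hs2 : (0:ℝ) < Real.sqrt 2 := Real.sqrt_pos.mpr two_pos
  have hσ2 : (0:ℝ) < σ * Real.sqrt 2 := mul_pos hσ hs2
  have h2s : Real.sqrt 2 * Real.sqrt 2 = 2 := Real.mul_self_sqrt (by norm_num)
  have hπs : (0:ℝ) < Real.sqrt π := Real.sqrt_pos.mpr Real.pi_pos
  have hsdiv : Real.sqrt (2 / π) = Real.sqrt 2 / Real.sqrt π := Real.sqrt_div (by norm_num) π
  -- derivative away from μ
  have key : ∀ z : ℝ, z ≠ μ → HasDerivAt (TTF μ σ ξ) (g z) z := by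
    intro z hz
    rcases hz.lt_or_gt with h | h
    · -- z < μ
      have hzn : z - μ < 0 := sub_neg.mpr h
      have habs : |z - μ| = μ - z := by rw [abs_of_neg hzn, neg_sub]
      set u := (μ - z) / (σ * Real.sqrt 2) with hu
      have h1 : HasDerivAt (fun w : ℝ => (μ - w) / (σ * Real.sqrt 2))
          (-1 / (σ * Real.sqrt 2)) z := ((hasDerivAt_id z).const_sub μ).div_const _
      have h2 := (erfc_hasDerivAt u).comp z h1
      have h3 := h2.rpow_const (p := -ξ) (Or.inl (erfc_pos u).ne')
      have h4 := ((h3.sub_const 1).const_mul (σ * (-1 / ξ))).const_add μ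
      have hev : TTF μ σ ξ =ᶠ[𝓝 z]
          fun w => μ + σ * (-1 / ξ) * ((erfc ∘ fun w : ℝ =>
            (μ - w) / (σ * Real.sqrt 2)) w ^ (-ξ) - 1) := by
        filter_upwards [Iio_mem_nhds h] with w hw
        have hw' : w - μ < 0 := sub_neg.mpr hw
        simp only [TTF, Real.sign_of_neg hw', abs_of_neg hw', Function.comp, neg_sub]
      have := h4.congr_of_eventuallyEq hev
      refine this.congr_deriv ?_
      have hu2 : u ^ 2 = (z - μ) ^ 2 / (2 * σ ^ 2) := by
        rw [hu, div_pow, mul_pow, Real.sq_sqrt two_pos.le]; ring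
      have hexp : Real.exp (-(z - μ) ^ 2 / (2 * σ ^ 2)) = Real.exp (-u ^ 2) := by
        rw [hu2]; ring_nf
      have hrp : erfc u ^ (-(ξ + 1)) = erfc u ^ (-ξ - 1) := by ring_nf
      rw [hg]
      simp only [habs, ← hu, hexp, hrp, Function.comp]
      rw [hsdiv]
      field_simp
      linear_combination (-erfc u ^ (-ξ - 1)) * h2s
    · -- μ < z
      have hzp : 0 < z - μ := sub_pos.mpr h
      have habs : |z - μ| = z - μ := abs_of_pos hzp
      set u := (z - μ) / (σ * Real.sqrt 2) with hu
      have h1 : HasDerivAt (fun w : ℝ => (w - μ) / (σ * Real.sqrt 2))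
          (1 / (σ * Real.sqrt 2)) z := ((hasDerivAt_id z).sub_const μ).div_const _
      have h2 := (erfc_hasDerivAt u).comp z h1
      have h3 := h2.rpow_const (p := -ξ) (Or.inl (erfc_pos u).ne')
      have h4 := ((h3.sub_const 1).const_mul (σ * (1 / ξ))).const_add μ
      have hev : TTF μ σ ξ =ᶠ[𝓝 z]
          fun w => μ + σ * (1 / ξ) * ((erfc ∘ fun w : ℝ =>
            (w - μ) / (σ * Real.sqrt 2)) w ^ (-ξ) - 1) := by
        filter_upwards [Ioi_mem_nhds h] with w hw
        have hw' : 0 < w - μ := sub_pos.mpr hw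
        simp only [TTF, Real.sign_of_pos hw', abs_of_pos hw', Function.comp]
      have := h4.congr_of_eventuallyEq hev
      refine this.congr_deriv ?_
      have hu2 : u ^ 2 = (z - μ) ^ 2 / (2 * σ ^ 2) := by
        rw [hu, div_pow, mul_pow, Real.sq_sqrt two_pos.le]; ring
      have hexp : Real.exp (-(z - μ) ^ 2 / (2 * σ ^ 2)) = Real.exp (-u ^ 2) := by
        rw [hu2]; ring_nf
      have hrp : erfc u ^ (-(ξ + 1)) = erfc u ^ (-ξ - 1) := by ring_nf
      rw [hg]
      simp only [habs, ← hu, hexp, hrp, Function.comp]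
      rw [hsdiv]
      field_simp
      linear_combination (-erfc u ^ (-ξ - 1)) * h2s
  -- continuity of g at μ
  have hinner : Continuous fun z : ℝ => |z - μ| / (σ * Real.sqrt 2) := by fun_prop
  have hgcont : ContinuousAt g μ := by
    apply ContinuousAt.mul
    · apply ContinuousAt.mul continuousAt_const
      exact (Real.continuous_exp.comp (by fun_prop)).continuousAt
    · exact ((erfc_continuous.comp hinner).continuousAt).rpow_const (Or.inl (erfc_pos _).ne')
  have hgμ : g μ = Real.sqrt (2 / π) := by
    simp [hg, erfc_zero]
  -- continuity of TTF at μ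
  have hTμ : TTF μ σ ξ μ = μ := by simp [TTF, Real.sign_zero]
  have habs_sign : ∀ x : ℝ, |Real.sign x| ≤ 1 := by
    intro x
    rcases lt_trichotomy x 0 with h|h|h
    · simp [Real.sign_of_neg h]
    · simp [h, Real.sign_zero]
    · simp [Real.sign_of_pos h]
  have cE : ContinuousAt (fun w : ℝ => erfc (|w - μ| / (σ * Real.sqrt 2)) ^ (-ξ) - 1) μ :=
    (((erfc_continuous.comp hinner).continuousAt).rpow_const
      (Or.inl (erfc_pos _).ne')).sub continuousAt_const
  have hE1 : Tendsto (fun w : ℝ => erfc (|w - μ| / (σ * Real.sqrt 2)) ^ (-ξ) - 1)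
      (𝓝 μ) (𝓝 0) := by
    have := cE.tendsto
    simpa [erfc_zero] using this
  have hb : Tendsto (fun w : ℝ => σ / ξ * |erfc (|w - μ| / (σ * Real.sqrt 2)) ^ (-ξ) - 1|)
      (𝓝 μ) (𝓝 0) := by
    have := (hE1.abs).const_mul (σ / ξ)
    simpa using this
  have hT0 : Tendsto (fun w : ℝ => σ * (Real.sign (w - μ) / ξ) *
      (erfc (|w - μ| / (σ * Real.sqrt 2)) ^ (-ξ) - 1)) (𝓝 μ) (𝓝 0) := by
    apply squeeze_zero_norm _ hb
    intro w
    rw [Real.norm_eq_abs, abs_mul, abs_mul, abs_div, abs_of_pos hσ, abs_of_pos hξ]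
    have h1 := habs_sign (w - μ)
    have h2 := abs_nonneg (erfc (|w - μ| / (σ * Real.sqrt 2)) ^ (-ξ) - 1)
    calc σ * (|Real.sign (w - μ)| / ξ) * |erfc (|w - μ| / (σ * Real.sqrt 2)) ^ (-ξ) - 1|
        ≤ σ * (1 / ξ) * |erfc (|w - μ| / (σ * Real.sqrt 2)) ^ (-ξ) - 1| := by gcongr
      _ = σ / ξ * |erfc (|w - μ| / (σ * Real.sqrt 2)) ^ (-ξ) - 1| := by ring
  have hTc : ContinuousAt (TTF μ σ ξ) μ := by
    rw [ContinuousAt, hTμ]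
    have h := tendsto_const_nhds (x := μ) (f := 𝓝 μ) |>.add hT0
    rw [add_zero] at h
    exact h
  -- derivative at μ
  have hμ' : HasDerivAt (TTF μ σ ξ) (g μ) μ := hasDerivAt_of_hasDerivAt_of_ne key hTc hgcont
  have hderiv : ∀ w, deriv (TTF μ σ ξ) w = g w := by
    intro w
    rcases eq_or_ne w μ with rfl | hw
    · exact hμ'.deriv
    · exact (key w hw).deriv
  refine ⟨?_, fun z hz => key z hz, hgμ ▸ hμ', ?_⟩
  · apply strictMono_of_deriv_pos
    intro x
    rw [hderiv x, hg]
    have := Real.rpow_pos_of_pos (erfc_pos (|x - μ| / (σ * Real.sqrt 2))) (-(ξ + 1))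
    positivity
  · have : deriv (TTF μ σ ξ) = g := funext hderiv
    rw [this]
    exact hgcont
end
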